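/- (Theorem 1) Let G = (Q, E, T, H) and Ĝ = (Q, E, T̂, H) be two preview automata for the same switched system Σ with s modes, where T̂(q1,q2) = min(T(q1,q2)) (so each preview time interval of Ĝ is the singleton consisting of the lower endpoint of the corresponding interval of G). Then, given a safety specification (S_i)_{i ∈ Q}, a collection (W_i)_{i ∈ Q} is a winning set with respect to G if and only if (W_i)_{i ∈ Q} is a winning set with respect to Ĝ. -/

import Mathlib

open scoped Classical

/-- A preview automaton `G = (Q, E, T, H)`: transitions `E` (no self-loops),
a nonempty interval `T(q₁,q₂) ⊆ ℕ` of possible preview times for each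
transition (possibly unbounded on the right), and a least holding time
`H(q) ∈ {1,2,…} ∪ {∞}` for each node, with `H(q) = ∞` exactly for the sink
states (nodes with no outgoing transition). -/
structure PreviewAutomaton (Q : Type*) where
  E : Q → Q → Prop
  T : Q → Q → Set ℕ
  H : Q → ℕ∞
  no_self_loop : ∀ q, ¬ E q q
  T_interval : ∀ q1 q2, E q1 q2 →
    ∃ (t1 : ℕ) (t2 : ℕ∞), (t1 : ℕ∞) ≤ t2 ∧
      T q1 q2 = {τ : ℕ | t1 ≤ τ ∧ (τ : ℕ∞) ≤ t2}
  H_pos : ∀ q, 1 ≤ H q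
  H_sink : ∀ q, (H q = ⊤ ↔ ∀ p, ¬ E q p)

/-- `(t_k, τ_k, d_k)_{1 ≤ k ≤ N}` (as functions on `ℕ`, with `N ≤ ∞`; values
beyond `N` are irrelevant) is a valid preview input sequence of `A` from the
initial node `q0`: with `(t_0, τ_0, d_0) = (0, 0, q0)`, for all `1 ≤ k ≤ N`,
(1) `t_{k−1} + τ_{k−1} ≤ t_k`, (2) `(d_{k−1}, d_k) ∈ E` and
`τ_k ∈ T(d_{k−1}, d_k)`, and (3)
`(t_k + τ_k − 1) − (t_{k−1} + τ_{k−1}) ≥ H(d_{k−1})`. -/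
def ValidInput {Q : Type*} (A : PreviewAutomaton Q) (q0 : Q) (N : ℕ∞)
    (t τ : ℕ → ℕ) (d : ℕ → Q) : Prop :=
  t 0 = 0 ∧ τ 0 = 0 ∧ d 0 = q0 ∧
  ∀ k : ℕ, 1 ≤ k → (k : ℕ∞) ≤ N →
    t (k - 1) + τ (k - 1) ≤ t k ∧
    A.E (d (k - 1)) (d k) ∧ τ k ∈ A.T (d (k - 1)) (d k) ∧
    A.H (d (k - 1)) ≤ ((t k + τ k - 1 - (t (k - 1) + τ (k - 1)) : ℕ) : ℕ∞)

/-- `q : ℕ → Q` is the execution corresponding to the preview input sequence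
`(t_k, τ_k, d_k)_{k ≤ N}`: `q(s) = d_k` on the interval
`I_k = [t_k + τ_k, t_{k+1} + τ_{k+1} − 1]` (unbounded on the right for
`k = N` when `N < ∞`). -/
def IsExecution {Q : Type*} (N : ℕ∞) (t τ : ℕ → ℕ) (d : ℕ → Q)
    (q : ℕ → Q) : Prop :=
  ∀ s k : ℕ, (k : ℕ∞) ≤ N → t k + τ k ≤ s →
    ((k : ℕ∞) + 1 ≤ N → s < t (k + 1) + τ (k + 1)) → q s = d k

/-- A controller maps, for each time `t*`, the partial run
`(q(0), x(0)), …, (q(t*), x(t*))` together with the preview inputs received up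
to time `t*` to a control input in `U`. -/
def Controller (Q X U : Type*) : Type _ :=
  (tstar : ℕ) → (Fin (tstar + 1) → Q × X) → (ℕ → Option (ℕ × ℕ × Q)) → U

/-- The preview inputs `(t_k, τ_k, d_k)` with `1 ≤ k ≤ N` received up to time
`t*` (indexed by `k`; `none` for previews not yet received). -/
def PreviewObs {Q : Type*} (N : ℕ∞) (t τ : ℕ → ℕ) (d : ℕ → Q)
    (tstar : ℕ) : ℕ → Option (ℕ × ℕ × Q) :=
  fun k => if 1 ≤ k ∧ (k : ℕ∞) ≤ N ∧ t k ≤ tstar then some (t k, τ k, d k)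
    else none

/-- `(q, x)` is a closed-loop run of the switched system `f` with preview
automaton `A` from initial node `q0`, under controller `𝒰` and the valid
preview input sequence `(N, t, τ, d)`: `q` is the corresponding execution and
`x(s+1) ∈ f_{q(s)}(x(s), u(s))` where `u(s)` is the controller output given
the partial run and the previews received up to time `s`. -/
def IsClosedLoopRun {Q X U : Type*} (A : PreviewAutomaton Q)
    (f : Q → X → U → Set X) (𝒰 : Controller Q X U) (q0 : Q) (N : ℕ∞)
    (t τ : ℕ → ℕ) (d : ℕ → Q) (q : ℕ → Q) (x : ℕ → X) : Prop :=
  ValidInput A q0 N t τ d ∧ IsExecution N t τ d q ∧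
  ∀ s : ℕ, x (s + 1) ∈ f (q s) (x s)
    (𝒰 s (fun i : Fin (s + 1) => (q i, x i)) (PreviewObs N t τ d s))

/-- `W` is a winning set with respect to mode `i`: some controller keeps every
closed-loop run starting from `(i, x0)` with `x0 ∈ W` safe (i.e. in `S_{q(t)}`
at every time `t`), over all valid preview input sequences and all
nondeterministic successors of the dynamics. -/
def IsWinningSet {Q X U : Type*} (A : PreviewAutomaton Q)
    (f : Q → X → U → Set X) (S : Q → Set X) (i : Q) (W : Set X) : Prop :=
  ∃ 𝒰 : Controller Q X U, ∀ x0 ∈ W, ∀ (N : ℕ∞) (t τ : ℕ → ℕ) (d : ℕ → Q)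
    (q : ℕ → Q) (x : ℕ → X), x 0 = x0 →
    IsClosedLoopRun A f 𝒰 i N t τ d q x → ∀ s : ℕ, x s ∈ S (q s)

/-- `W` is the maximal winning set with respect to mode `i`: it is a winning
set, and from every `x0 ∉ W`, for every controller, some closed-loop run is
unsafe. -/
def IsMaximalWinningSet {Q X U : Type*} (A : PreviewAutomaton Q)
    (f : Q → X → U → Set X) (S : Q → Set X) (i : Q) (W : Set X) : Prop :=
  IsWinningSet A f S i W ∧
  ∀ x0 ∉ W, ∀ 𝒰 : Controller Q X U, ∃ (N : ℕ∞) (t τ : ℕ → ℕ) (d : ℕ → Q)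
    (q : ℕ → Q) (x : ℕ → X), x 0 = x0 ∧
    IsClosedLoopRun A f 𝒰 i N t τ d q x ∧ ∃ s : ℕ, x s ∉ S (q s)


lemma sInf_mem_T {Q : Type*} (A : PreviewAutomaton Q) {q1 q2 : Q}
    (h : A.E q1 q2) : sInf (A.T q1 q2) ∈ A.T q1 q2 := by
  obtain ⟨t1, t2, h12, hs⟩ := A.T_interval q1 q2 h
  exact Nat.sInf_mem ⟨t1, by rw [hs]; exact ⟨le_refl _, h12⟩⟩

/-- Theorem 1: let `G = (Q,E,T,H)` and `Ĝ = (Q,E,T̂,H)` be two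
preview automata for the same switched system, where
`T̂(q1,q2) = {min(T(q1,q2))}`. Then, given a safety specification `(S_i)`,
`(W_i)_{i ∈ Q}` is a winning set with respect to `G` iff it is a winning set
with respect to `Ĝ`. -/
theorem winning_iff_min_preview {Q X U : Type*}
    (A Ahat : PreviewAutomaton Q) (f : Q → X → U → Set X)
    (S : Q → Set X) (W : Q → Set X)
    (hE : Ahat.E = A.E) (hH : Ahat.H = A.H)
    (hT : ∀ q1 q2, A.E q1 q2 → Ahat.T q1 q2 = {sInf (A.T q1 q2)}) :
    (∀ i, IsWinningSet A f S i (W i)) ↔ (∀ i, IsWinningSet Ahat f S i (W i)) := by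
  constructor
  · -- A winning ⟹ Ahat winning: same controller works, since every valid
    -- input of Ahat is a valid input of A.
    intro h i
    obtain ⟨𝒰, h𝒰⟩ := h i
    refine ⟨𝒰, ?_⟩
    intro x0 hx0 N t τ d q x hx hrun
    refine h𝒰 x0 hx0 N t τ d q x hx ⟨?_, hrun.2.1, hrun.2.2⟩
    obtain ⟨h0, h1, h2, h3⟩ := hrun.1
    refine ⟨h0, h1, h2, fun k hk hkN => ?_⟩
    obtain ⟨c1, c2, c3, c4⟩ := h3 k hk hkN
    rw [hE] at c2
    refine ⟨c1, c2, ?_, hH ▸ c4⟩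
    rw [hT _ _ c2, Set.mem_singleton_iff] at c3
    rw [c3]
    exact sInf_mem_T A c2
  · -- Ahat winning ⟹ A winning: transform the controller.
    intro h i
    obtain ⟨𝒰, h𝒰⟩ := h i
    refine ⟨fun s hist obs => 𝒰 s hist (fun k => (obs k).bind (fun p =>
      let d' : Q := if k = 1 then i else ((obs (k - 1)).map (fun r => r.2.2)).getD p.2.2
      let m : ℕ := sInf (A.T d' p.2.2)
      if p.1 + p.2.1 - m ≤ s then some (p.1 + p.2.1 - m, m, p.2.2) else none)), ?_⟩
    intro x0 hx0 N t τ d q x hx hrun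
    obtain ⟨hvalid, hexec, hdyn⟩ := hrun
    obtain ⟨ht0, hτ0, hd0, hcond⟩ := hvalid
    set τh : ℕ → ℕ := fun k => if k = 0 then 0 else sInf (A.T (d (k - 1)) (d k)) with hτh
    set th : ℕ → ℕ := fun k => t k + τ k - τh k with hth
    have hτhk : ∀ k : ℕ, 1 ≤ k → τh k = sInf (A.T (d (k - 1)) (d k)) := by
      intro k hk
      simp [hτh, Nat.one_le_iff_ne_zero.mp hk]
    have hτle : ∀ k : ℕ, 1 ≤ k → (k : ℕ∞) ≤ N →
        τh k ≤ τ k ∧ τh k ∈ A.T (d (k - 1)) (d k) := by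
      intro k hk hkN
      obtain ⟨c1, c2, c3, c4⟩ := hcond k hk hkN
      rw [hτhk k hk]
      exact ⟨Nat.sInf_le c3, sInf_mem_T A c2⟩
    have hsum : ∀ k : ℕ, (k : ℕ∞) ≤ N → th k + τh k = t k + τ k := by
      intro k hkN
      rcases Nat.eq_zero_or_pos k with h0 | h1
      · subst h0; simp [hth, hτh, ht0, hτ0]
      · have hle := (hτle k h1 hkN).1
        simp only [hth]
        omega
    have htle : ∀ k : ℕ, 1 ≤ k → (k : ℕ∞) ≤ N → t k ≤ th k := by
      intro k hk hkN
      have hle := (hτle k hk hkN).1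
      simp only [hth]
      omega
    have hkN' : ∀ k : ℕ, (k : ℕ∞) ≤ N → ((k - 1 : ℕ) : ℕ∞) ≤ N := by
      intro k hkN
      exact le_trans (Nat.cast_le.mpr (Nat.sub_le k 1)) hkN
    have hvalid' : ValidInput Ahat i N th τh d := by
      refine ⟨by simp [hth, hτh, ht0, hτ0], by simp [hτh], hd0, ?_⟩
      intro k hk hkN
      obtain ⟨c1, c2, c3, c4⟩ := hcond k hk hkN
      refine ⟨?_, hE ▸ c2, ?_, ?_⟩
      · rw [hsum (k - 1) (hkN' k hkN)]
        exact le_trans c1 (htle k hk hkN)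
      · rw [hT _ _ c2, Set.mem_singleton_iff]
        exact hτhk k hk
      · rw [hsum k hkN, hsum (k - 1) (hkN' k hkN), hH]
        exact c4
    have hexec' : IsExecution N th τh d q := by
      intro s k hkN hle hlt
      refine hexec s k hkN (by rw [← hsum k hkN]; exact hle) ?_
      intro hk1
      have hk1N : ((k + 1 : ℕ) : ℕ∞) ≤ N := by push_cast; exact hk1
      rw [← hsum (k + 1) hk1N]
      exact hlt hk1
    have hobs : ∀ s : ℕ, (fun k => ((PreviewObs N t τ d s) k).bind (fun p =>
        let d' : Q := if k = 1 then i
          else (((PreviewObs N t τ d s) (k - 1)).map (fun r => r.2.2)).getD p.2.2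
        let m : ℕ := sInf (A.T d' p.2.2)
        if p.1 + p.2.1 - m ≤ s then some (p.1 + p.2.1 - m, m, p.2.2) else none))
        = PreviewObs N th τh d s := by
      intro s
      funext k
      by_cases hc : 1 ≤ k ∧ (k : ℕ∞) ≤ N ∧ t k ≤ s
      · obtain ⟨hk, hkN, hts⟩ := hc
        have hobsk : PreviewObs N t τ d s k = some (t k, τ k, d k) := by
          simp only [PreviewObs]
          rw [if_pos ⟨hk, hkN, hts⟩]
        have hd' : (if k = 1 then i
            else (((PreviewObs N t τ d s) (k - 1)).map (fun r => r.2.2)).getD (d k))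
            = d (k - 1) := by
          by_cases hk1 : k = 1
          · subst hk1; simp [hd0]
          · have h1k : (1 : ℕ) ≤ k - 1 := by omega
            obtain ⟨c1, c2, c3, c4⟩ := hcond k hk hkN
            have hts' : t (k - 1) ≤ s := le_trans (le_trans (Nat.le_add_right _ _) c1) hts
            have hprev : PreviewObs N t τ d s (k - 1)
                = some (t (k - 1), τ (k - 1), d (k - 1)) := by
              simp only [PreviewObs]
              rw [if_pos ⟨h1k, hkN' k hkN, hts'⟩]
            rw [if_neg hk1, hprev]
            rfl
        rw [hobsk]
        simp only [Option.bind_some]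
        rw [hd', ← hτhk k hk]
        have hthk : th k = t k + τ k - τh k := rfl
        rw [← hthk]
        simp only [PreviewObs]
        by_cases hths : th k ≤ s
        · rw [if_pos hths, if_pos ⟨hk, hkN, hths⟩]
        · rw [if_neg hths, if_neg (by rintro ⟨_, _, h'⟩; exact hths h')]
      · have hobsk : PreviewObs N t τ d s k = none := by
          simp only [PreviewObs]
          rw [if_neg hc]
        rw [hobsk]
        simp only [Option.bind_none]
        symm
        simp only [PreviewObs]
        rw [if_neg]
        rintro ⟨hk, hkN, hths⟩
        exact hc ⟨hk, hkN, le_trans (htle k hk hkN) hths⟩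
    have hdyn' : ∀ s : ℕ, x (s + 1) ∈ f (q s) (x s)
        (𝒰 s (fun i : Fin (s + 1) => (q i, x i)) (PreviewObs N th τh d s)) := by
      intro s
      have hh := hdyn s
      beta_reduce at hh
      rw [hobs s] at hh
      exact hh
    exact h𝒰 x0 hx0 N th τh d q x hx ⟨hvalid', hexec', hdyn'⟩
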